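/- In the k-demand hardness reduction from k-Partite Hypergraph Label Cover to k-DTSN: if there is a labeling that strongly satisfies every hyperedge, then the constructed k-DTSN instance has a feasible solution of cost exactly |E| (the number of hyperedges), which is optimal. -/
import Mathlib


namespace TSNk

variable {k : ℕ} {Vp : Fin k → Type} {Lab C : Type}

/-- A label tuple `ℓ` (one label per part) is *agreeing* for hyperedge `e` if all
its labels are mapped to the same color by the projection functions of `e`. -/
def Agreeing (π : ((t : Fin k) → Vp t) → Fin k → Lab → C)
    (e : (t : Fin k) → Vp t) (ℓ : Fin k → Lab) : Prop :=
  ∀ s s', π e s (ℓ s) = π e s' (ℓ s')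

/-- A candidate solution to the constructed k-DTSN instance: for each time `t`, the
source-to-sink path at time `t` is determined by a labeling `(sol t).1` of part `t`
(choosing a strand in each vertex-bundle) and, in each hyperedge-bundle, a chosen
label combination `(sol t).2 e`. -/
def Sol (Vp : Fin k → Type) (Lab : Type) :=
  (t : Fin k) → ((Vp t → Lab) × (((s : Fin k) → Vp s) → Fin k → Lab))

/-- Validity: the chosen combination extends the strand's label, and is either an
agreeing combination (a merged contact edge) or a dummy strand when no agreeing
combination extending the strand's label exists. -/
def Valid (π : ((t : Fin k) → Vp t) → Fin k → Lab → C)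
    (E : Finset ((t : Fin k) → Vp t)) (sol : Sol Vp Lab) : Prop :=
  ∀ t, ∀ e ∈ E,
    (sol t).2 e t = (sol t).1 (e t) ∧
    (Agreeing π e ((sol t).2 e) ∨
      ¬ ∃ ℓ : Fin k → Lab, Agreeing π e ℓ ∧ ℓ t = (sol t).1 (e t))

variable [∀ t, DecidableEq (Vp t)] [DecidableEq Lab] [DecidableEq C]

instance (π : ((t : Fin k) → Vp t) → Fin k → Lab → C)
    (e : (t : Fin k) → Vp t) (ℓ : Fin k → Lab) : Decidable (Agreeing π e ℓ) :=
  inferInstanceAs (Decidable (∀ s s', π e s (ℓ s) = π e s' (ℓ s')))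

/-- Contact edges traversed by the time-`t` path: one per hyperedge, identified by
the chosen agreeing label combination (merged across times) or by a dummy tag. -/
def contacts (π : ((t : Fin k) → Vp t) → Fin k → Lab → C)
    (E : Finset ((t : Fin k) → Vp t)) (sol : Sol Vp Lab) (t : Fin k) :
    Finset (((s : Fin k) → Vp s) × ((Fin k → Lab) ⊕ Fin k)) :=
  E.image (fun e => (e, if Agreeing π e ((sol t).2 e)
    then Sum.inl ((sol t).2 e) else Sum.inr t))

/-- Cost: number of distinct contact edges used over all times (each contact edge
has weight 1; merged contact edges are counted once). -/
def cost (π : ((t : Fin k) → Vp t) → Fin k → Lab → C)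
    (E : Finset ((t : Fin k) → Vp t)) (sol : Sol Vp Lab) : ℕ :=
  (Finset.univ.biUnion (contacts π E sol)).card

/-- if there is a labeling strongly satisfying every hyperedge, then
the constructed k-DTSN instance has a feasible solution of cost exactly `|E|`,
which is optimal. -/
theorem stmt10 (hk : 0 < k)
    (π : ((t : Fin k) → Vp t) → Fin k → Lab → C)
    (E : Finset ((t : Fin k) → Vp t))
    (hyes : ∃ φ : (t : Fin k) → Vp t → Lab,
      ∀ e ∈ E, Agreeing π e (fun s => φ s (e s))) :
    (∃ sol : Sol Vp Lab, Valid π E sol ∧ cost π E sol = E.card) ∧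
    (∀ sol : Sol Vp Lab, Valid π E sol → E.card ≤ cost π E sol) := by
  obtain ⟨φ, hφ⟩ := hyes
  have hcard : ∀ (sol : Sol Vp Lab) t, (contacts π E sol t).card = E.card := by
    intro sol t
    apply Finset.card_image_of_injOn
    intro a _ b _ h
    exact congrArg Prod.fst h
  constructor
  · refine ⟨fun t => (φ t, fun e => fun s => φ s (e s)), ?_, ?_⟩
    · intro t e he
      exact ⟨rfl, Or.inl (hφ e he)⟩
    · set sol : Sol Vp Lab := fun t => (φ t, fun e => fun s => φ s (e s)) with hsol
      have h : ∀ t, contacts π E sol t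
          = E.image (fun e => (e, Sum.inl (fun s => φ s (e s)))) := by
        intro t
        apply Finset.image_congr
        intro e he
        simp only [hsol, if_pos (hφ e he)]
      have hb : Finset.univ.biUnion (contacts π E sol) = contacts π E sol ⟨0, hk⟩ := by
        apply Finset.Subset.antisymm
        · intro x hx
          obtain ⟨t, _, hx⟩ := Finset.mem_biUnion.1 hx
          rw [h t, ← h ⟨0, hk⟩] at hx
          exact hx
        · intro x hx
          exact Finset.mem_biUnion.2 ⟨⟨0, hk⟩, Finset.mem_univ _, hx⟩
      rw [cost, hb, hcard]
  · intro sol _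
    calc E.card = (contacts π E sol ⟨0, hk⟩).card := (hcard _ _).symm
      _ ≤ cost π E sol := Finset.card_le_card
          (Finset.subset_biUnion_of_mem _ (Finset.mem_univ _))

end TSNk
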